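/- Let x be a node of a rooted tree, z a proper ancestor of x at distance d = depth(x) − depth(z), and i = ⌈log₂ d⌉. Let P_i(x) be the multiset of labels on the upward path of 1+2^i nodes starting at x (truncated at the root). Then every τ-majority of the path from x to z (inclusive) is a (τ/2)-majority of P_i(x). -/

import Mathlib

/-- Let x be a node, z a proper ancestor at distance d, and i = ⌈log₂ d⌉. Every
τ-majority of the path from x to z (inclusive) is a (τ/2)-majority of the multiset
P_i(x) of labels on the upward path of 1+2^i nodes starting at x (truncated at the root,
i.e. at depth(x) ancestors). -/
theorem stmt4 (τ : ℝ) (hτ0 : 0 < τ) (hτ1 : τ < 1)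
    (V : Type) (parent : V → V) (label : V → ℕ) (depth : V → ℕ)
    (x z : V) (d : ℕ) (hd : 0 < d) (hdz : depth z < depth x)
    (hdd : d = depth x - depth z) (hz : z = parent^[d] x) (ℓ : ℕ) :
    let i := Nat.clog 2 d
    let Pi : Multiset ℕ :=
      (Multiset.range (min (2 ^ i) (depth x) + 1)).map (fun k => label (parent^[k] x))
    let path : Multiset ℕ := (Multiset.range (d + 1)).map (fun k => label (parent^[k] x))
    τ * (path.card : ℝ) < (path.count ℓ : ℝ) →
      (τ / 2) * (Pi.card : ℝ) < (Pi.count ℓ : ℝ) := by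
  intro i Pi path hmaj
  set m : ℕ := min (2 ^ i) (depth x) with hm
  -- d ≤ 2^i
  have h1 : d ≤ 2 ^ i := Nat.le_pow_clog one_lt_two d
  -- 2^i ≤ 2*d
  have h2 : 2 ^ i ≤ 2 * d := by
    rcases eq_or_lt_of_le (show 1 ≤ d from hd) with h | h
    · have : i = 0 := by simp [i, ← h]
      simp [this]; omega
    · have hi1 : 1 ≤ i := Nat.clog_pos one_lt_two (by omega)
      have hlt : 2 ^ (i - 1) < d := Nat.pow_pred_clog_lt_self one_lt_two h
      have : 2 ^ i = 2 * 2 ^ (i - 1) := by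
        rw [← pow_succ']
        congr 1
        omega
      omega
  have hdx : d ≤ depth x := by omega
  have hdm : d ≤ m := le_min h1 hdx
  have hm2d : m ≤ 2 * d := le_trans (min_le_left _ _) h2
  -- cards
  have hcPath : path.card = d + 1 := by simp [path]
  have hcPi : Pi.card = m + 1 := by simp [Pi, hm]
  -- path ≤ Pi as multisets
  have hle : path ≤ Pi :=
    Multiset.map_le_map (Multiset.range_le.mpr (by omega))
  have hcount : path.count ℓ ≤ Pi.count ℓ := Multiset.count_le_of_le ℓ hle
  rw [hcPath] at hmaj
  rw [hcPi]
  have h3 : (τ / 2) * ((m : ℝ) + 1) ≤ τ * ((d : ℝ) + 1) := by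
    have : (m : ℝ) + 1 ≤ 2 * ((d : ℝ) + 1) := by
      have : (m : ℝ) ≤ 2 * d := by exact_mod_cast hm2d
      linarith
    nlinarith
  push_cast
  push_cast at hmaj
  calc (τ / 2) * ((m : ℝ) + 1) ≤ τ * ((d : ℝ) + 1) := h3
    _ < (path.count ℓ : ℝ) := hmaj
    _ ≤ (Pi.count ℓ : ℝ) := by exact_mod_cast hcount
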